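/- Let F be a trilinear form on V with the W₃-symmetries, define T(x,y,z) = (1/2)(F(x,y,Pz) + F(y,z,Px) + F(z,x,Py)), and let (e₁, …, eₙ) be an orthonormal basis of V. Then the sum over all indices i, j, k of T(eᵢ,eⱼ,eₖ)² equals (3/2) times the sum over all indices i, j, k of F(eᵢ,eⱼ,eₖ)². (This is the computational core of Proposition 3.5: the scalar curvatures of the Levi-Civita connection and the RPT-connection on a Riemannian almost product W₃-manifold satisfy τ = τ' + (3/8)‖∇P‖².) -/

import Mathlib

open scoped RealInnerProductSpace

section Aux
variable {V : Type*} [NormedAddCommGroup V] [InnerProductSpace ℝ V]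

private lemma cyc_sum {n : ℕ} (h : Fin n → Fin n → Fin n → ℝ) :
    ∑ i : Fin n, ∑ j : Fin n, ∑ k : Fin n, h i j k
      = ∑ i : Fin n, ∑ j : Fin n, ∑ k : Fin n, h j k i := by
  rw [show (∑ i : Fin n, ∑ j : Fin n, ∑ k : Fin n, h i j k)
      = ∑ i : Fin n, ∑ k : Fin n, ∑ j : Fin n, h i j k from
    Finset.sum_congr rfl fun i _ => Finset.sum_comm]
  exact Finset.sum_comm

private lemma contract_aux {n : ℕ} (b : OrthonormalBasis (Fin n) ℝ V)
    (φ ψ : V → ℝ) (u w : V) (hu : ∀ x, φ x = ⟪u, x⟫) (hw : ∀ x, ψ x = ⟪w, x⟫) :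
    ∑ k : Fin n, φ (b k) * ψ (b k) = ⟪u, w⟫ := by
  simp_rw [hu, hw]
  calc ∑ k : Fin n, ⟪u, b k⟫ * ⟪w, b k⟫
      = ∑ k : Fin n, ⟪u, b k⟫ * ⟪b k, w⟫ := by
        simp_rw [real_inner_comm w]
    _ = ⟪u, w⟫ := b.sum_inner_mul_inner u w

private lemma riesz_aux {n : ℕ} (b : OrthonormalBasis (Fin n) ℝ V) (φ : V →ₗ[ℝ] ℝ) :
    ∃ u, ∀ x, φ x = ⟪u, x⟫ := by
  refine ⟨∑ i, φ (b i) • b i, fun x => ?_⟩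
  rw [sum_inner]
  simp_rw [real_inner_smul_left]
  conv_lhs => rw [← b.sum_repr' x]
  rw [map_sum]
  simp_rw [map_smul, smul_eq_mul]
  exact Finset.sum_congr rfl fun i _ => by ring

private lemma Psym (P : V →ₗ[ℝ] V) (hP : ∀ x, P (P x) = x)
    (hPg : ∀ x y, ⟪P x, P y⟫ = ⟪x, y⟫) (x y : V) : ⟪P x, y⟫ = ⟪x, P y⟫ := by
  conv_lhs => rw [← hP y]
  rw [hPg]

private lemma sum_PP (P : V →ₗ[ℝ] V) (hP : ∀ x, P (P x) = x)
    (hPg : ∀ x y, ⟪P x, P y⟫ = ⟪x, y⟫) {n : ℕ} (b : OrthonormalBasis (Fin n) ℝ V) (φ ψ : V →ₗ[ℝ] ℝ) :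
    ∑ k : Fin n, φ (P (b k)) * ψ (P (b k)) = ∑ k : Fin n, φ (b k) * ψ (b k) := by
  obtain ⟨u, hu⟩ := riesz_aux b φ
  obtain ⟨w, hw⟩ := riesz_aux b ψ
  have hu' : ∀ x, φ (P x) = ⟪P u, x⟫ := fun x => by rw [hu, Psym P hP hPg]
  have hw' : ∀ x, ψ (P x) = ⟪P w, x⟫ := fun x => by rw [hw, Psym P hP hPg]
  rw [contract_aux b (fun x => φ (P x)) (fun x => ψ (P x)) (P u) (P w) hu' hw',
    contract_aux b (φ ·) (ψ ·) u w hu hw, hPg]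

private lemma sum_Pswap (P : V →ₗ[ℝ] V) (hP : ∀ x, P (P x) = x)
    (hPg : ∀ x y, ⟪P x, P y⟫ = ⟪x, y⟫) {n : ℕ} (b : OrthonormalBasis (Fin n) ℝ V) (φ ψ : V →ₗ[ℝ] ℝ) :
    ∑ k : Fin n, φ (P (b k)) * ψ (b k) = ∑ k : Fin n, φ (b k) * ψ (P (b k)) := by
  obtain ⟨u, hu⟩ := riesz_aux b φ
  obtain ⟨w, hw⟩ := riesz_aux b ψ
  have hu' : ∀ x, φ (P x) = ⟪P u, x⟫ := fun x => by rw [hu, Psym P hP hPg]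
  have hw' : ∀ x, ψ (P x) = ⟪P w, x⟫ := fun x => by rw [hw, Psym P hP hPg]
  rw [contract_aux b (fun x => φ (P x)) (ψ ·) (P u) w hu' hw,
    contract_aux b (φ ·) (fun x => ψ (P x)) u (P w) hu hw', Psym P hP hPg]

end Aux

theorem stmt_5 {V : Type*} [NormedAddCommGroup V] [InnerProductSpace ℝ V]
    [FiniteDimensional ℝ V]
    (P : V →ₗ[ℝ] V) (hP : ∀ x, P (P x) = x)
    (hPg : ∀ x y, ⟪P x, P y⟫ = ⟪x, y⟫)
    (F : V →ₗ[ℝ] V →ₗ[ℝ] V →ₗ[ℝ] ℝ)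
    (hF1 : ∀ x y z, F x y z = F x z y)
    (hF2 : ∀ x y z, F x y z = -(F x (P y) (P z)))
    (hF3 : ∀ x y z, F x y z + F y z x + F z x y = 0)
    (T : V → V → V → ℝ)
    (hT : ∀ x y z, T x y z = (1/2) * (F x y (P z) + F y z (P x) + F z x (P y)))
    (n : ℕ) (b : OrthonormalBasis (Fin n) ℝ V) :
    ∑ i : Fin n, ∑ j : Fin n, ∑ k : Fin n, (T (b i) (b j) (b k)) ^ 2
      = (3/2) * ∑ i : Fin n, ∑ j : Fin n, ∑ k : Fin n, (F (b i) (b j) (b k)) ^ 2 := by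
  set f : Fin n → Fin n → Fin n → ℝ := fun i j k => F (b i) (b j) (b k) with hf
  set g : Fin n → Fin n → Fin n → ℝ := fun i j k => F (b i) (b j) (P (b k)) with hg
  set S : ℝ := ∑ i : Fin n, ∑ j : Fin n, ∑ k : Fin n, f i j k ^ 2 with hS
  set Y : ℝ := ∑ i : Fin n, ∑ j : Fin n, ∑ k : Fin n, f i j k * f j k i with hYdef
  set X : ℝ := ∑ i : Fin n, ∑ j : Fin n, ∑ k : Fin n, g i j k * g j k i with hXdef
  -- step 1 : Y = -(1/2) * S
  have hcycY : ∑ i : Fin n, ∑ j : Fin n, ∑ k : Fin n, f j k i * f k i j = Y :=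
    (cyc_sum fun i j k => f i j k * f j k i).symm
  have hcycY2 : ∑ i : Fin n, ∑ j : Fin n, ∑ k : Fin n, f i j k * f k i j = Y := by
    rw [cyc_sum fun i j k => f i j k * f k i j]
    simp_rw [mul_comm]
    exact hYdef.symm
  have hSb : ∑ i : Fin n, ∑ j : Fin n, ∑ k : Fin n, f j k i ^ 2 = S :=
    (cyc_sum fun i j k => f i j k ^ 2).symm
  have hSc : ∑ i : Fin n, ∑ j : Fin n, ∑ k : Fin n, f k i j ^ 2 = S := by
    rw [← hSb]
    exact (cyc_sum fun i j k => f j k i ^ 2).symm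
  have hY : 3 * S + 6 * Y = 0 := by
    have h0 : ∀ i j k : Fin n, (f i j k + f j k i + f k i j) ^ 2 = 0 := by
      intro i j k; rw [hF3 (b i) (b j) (b k)]; ring
    have h1 : ∑ i : Fin n, ∑ j : Fin n, ∑ k : Fin n,
        (f i j k + f j k i + f k i j) ^ 2 = 0 := by
      simp [h0]
    have h2 : ∀ i j k : Fin n, (f i j k + f j k i + f k i j) ^ 2
        = f i j k ^ 2 + f j k i ^ 2 + f k i j ^ 2
          + 2 * (f i j k * f j k i) + 2 * (f j k i * f k i j)
          + 2 * (f i j k * f k i j) := fun i j k => by ring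
    simp_rw [h2, Finset.sum_add_distrib, ← Finset.mul_sum] at h1
    rw [hSb, hSc, hYdef.symm, hcycY, hcycY2, ← hS] at h1
    linarith
  -- step 2 : X = -Y
  have hX : X = -Y := by
    have hstep : ∀ i j : Fin n,
        ∑ k : Fin n, g i j k * g j k i
          = ∑ k : Fin n, f i j k * (-(f j k i)) := by
      intro i j
      have h1 : ∑ k : Fin n, (F (b i) (b j)) (P (b k))
            * ((F (b j)).flip (P (b i))) (b k)
          = ∑ k : Fin n, (F (b i) (b j)) (b k)
            * ((F (b j)).flip (P (b i))) (P (b k)) :=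
        sum_Pswap P hP hPg b (F (b i) (b j)) ((F (b j)).flip (P (b i)))
      simp only [LinearMap.flip_apply] at h1
      calc ∑ k : Fin n, g i j k * g j k i
          = ∑ k : Fin n, F (b i) (b j) (b k) * F (b j) (P (b k)) (P (b i)) := h1
        _ = ∑ k : Fin n, f i j k * (-(f j k i)) := by
            refine Finset.sum_congr rfl fun k _ => ?_
            have := hF2 (b j) (b k) (b i)
            simp only [hf]
            rw [show F (b j) (P (b k)) (P (b i)) = -(F (b j) (b k) (b i)) by linarith]
    rw [hXdef, hYdef]
    calc ∑ i : Fin n, ∑ j : Fin n, ∑ k : Fin n, g i j k * g j k i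
        = ∑ i : Fin n, ∑ j : Fin n, ∑ k : Fin n, f i j k * (-(f j k i)) :=
          Finset.sum_congr rfl fun i _ => Finset.sum_congr rfl fun j _ => hstep i j
      _ = -∑ i : Fin n, ∑ j : Fin n, ∑ k : Fin n, f i j k * f j k i := by
          simp [Finset.sum_neg_distrib, mul_neg]
  -- step 3 : ∑ g² = S
  have hSgg : ∑ i : Fin n, ∑ j : Fin n, ∑ k : Fin n, g i j k ^ 2 = S := by
    rw [hS]
    refine Finset.sum_congr rfl fun i _ => Finset.sum_congr rfl fun j _ => ?_
    have := sum_PP P hP hPg b (F (b i) (b j)) (F (b i) (b j))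
    simpa [pow_two] using this
  have hSgb : ∑ i : Fin n, ∑ j : Fin n, ∑ k : Fin n, g j k i ^ 2 = S := by
    rw [← hSgg]
    exact (cyc_sum fun i j k => g i j k ^ 2).symm
  have hSgc : ∑ i : Fin n, ∑ j : Fin n, ∑ k : Fin n, g k i j ^ 2 = S := by
    rw [← hSgb]
    exact (cyc_sum fun i j k => g j k i ^ 2).symm
  have hXb : ∑ i : Fin n, ∑ j : Fin n, ∑ k : Fin n, g j k i * g k i j = X := by
    rw [hXdef, cyc_sum fun i j k => g i j k * g j k i]
  have hXc : ∑ i : Fin n, ∑ j : Fin n, ∑ k : Fin n, g i j k * g k i j = X := by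
    rw [cyc_sum fun i j k => g i j k * g k i j, hXdef]
    simp_rw [mul_comm]
  -- final assembly
  have hexp : ∀ i j k : Fin n, (T (b i) (b j) (b k)) ^ 2
      = (1/4 : ℝ) * (g i j k ^ 2) + (1/4 : ℝ) * (g j k i ^ 2)
        + (1/4 : ℝ) * (g k i j ^ 2)
        + (1/2 : ℝ) * (g i j k * g j k i) + (1/2 : ℝ) * (g j k i * g k i j)
        + (1/2 : ℝ) * (g i j k * g k i j) := by
    intro i j k
    rw [hT (b i) (b j) (b k)]
    simp only [hg]
    ring
  simp_rw [hexp, Finset.sum_add_distrib, ← Finset.mul_sum]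
  rw [hSgg, hSgb, hSgc, hXb, hXc, hXdef.symm]
  rw [hX]
  linarith [hY]
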